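/- Let A be a symmetric n×n integer matrix with even diagonal entries such that A modulo 4 equals diag(r·[[2,1],[1,2]], s·[[0,1],[1,0]], t·[[0,2],[2,0]], p·[2], m·[0]), and let q be the associated quadratic form on 𝔽₂ⁿ with radical V̄₀ (the kernel of A mod 2). Then q(V̄₀) = {0} if and only if p = 0, and q(V̄₀) = 𝔽₂ if and only if p ≥ 1. -/

import Mathlib

/-- Entry `(i,j)` of the block diagonal matrix
`diag(r·[[2,1],[1,2]], s·[[0,1],[1,0]], t·[[0,2],[2,0]], p·[2], m·[0])`
(the `m` trailing zero rows/columns are implicit: the entry is `0` there). -/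
def nfEntry (r s t p : ℕ) (i j : ℕ) : ℤ :=
  if i < 2*r ∧ j < 2*r then (if i = j then 2 else if i / 2 = j / 2 then 1 else 0)
  else if 2*r ≤ i ∧ i < 2*r+2*s ∧ 2*r ≤ j ∧ j < 2*r+2*s then
    (if i ≠ j ∧ i / 2 = j / 2 then 1 else 0)
  else if 2*r+2*s ≤ i ∧ i < 2*r+2*s+2*t ∧ 2*r+2*s ≤ j ∧ j < 2*r+2*s+2*t then
    (if i ≠ j ∧ i / 2 = j / 2 then 2 else 0)
  else if 2*r+2*s+2*t ≤ i ∧ i < 2*r+2*s+2*t+p ∧ i = j then 2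
  else 0

open Matrix in
/-- The quadratic form over `𝔽₂` associated with a symmetric integer matrix `A`
with even diagonal entries: `q(v) = (ṽᵀ A ṽ)/2 (mod 2)`, computed on the
canonical integer lift `ṽ` of `v` (it is independent of the chosen lift). -/
def qf {n : ℕ} (A : Matrix (Fin n) (Fin n) ℤ) (v : Fin n → ZMod 2) : ZMod 2 :=
  ((((fun i => ((v i).val : ℤ)) ⬝ᵥ A.mulVec (fun i => ((v i).val : ℤ))) / 2 : ℤ) : ZMod 2)

lemma nf_symm (r s t p i j : ℕ) : nfEntry r s t p i j = nfEntry r s t p j i := by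
  unfold nfEntry; split_ifs <;> omega

lemma nf_row (r s t p i k : ℕ) (hi : i < 2*r+2*s) :
    nfEntry r s t p (if i % 2 = 0 then i+1 else i-1) k % 2 = if k = i then (1:ℤ) else 0 := by
  unfold nfEntry; split_ifs <;> omega

lemma nf_two_mul (r s t p i j : ℕ) (hi : 2*r+2*s ≤ i) (hj : 2*r+2*s ≤ j) :
    (4:ℤ) ∣ 2 * nfEntry r s t p i j := by
  unfold nfEntry; split_ifs <;> omega

lemma nf_diag0 (r s t i : ℕ) (hi : 2*r+2*s ≤ i) : nfEntry r s t 0 i i = 0 := by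
  unfold nfEntry; split_ifs <;> omega

lemma nf_diag_p (r s t p : ℕ) (hp : 1 ≤ p) :
    nfEntry r s t p (2*r+2*s+2*t) (2*r+2*s+2*t) = 2 := by
  unfold nfEntry; split_ifs <;> omega

lemma nf_col_p (r s t p i j : ℕ) (hj : 2*r+2*s+2*t ≤ j) :
    (2:ℤ) ∣ nfEntry r s t p i j := by
  unfold nfEntry; split_ifs <;> omega

lemma c42 {a b : ℤ} (h : (a : ZMod 4) = (b : ZMod 4)) : (a : ZMod 2) = (b : ZMod 2) := by
  have := congrArg (ZMod.castHom (by norm_num : (2:ℕ) ∣ 4) (ZMod 2)) h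
  simpa using this

lemma val_cast2 (x : ZMod 2) : ((x.val : ℤ) : ZMod 2) = x := by
  have : ∀ y : ZMod 2, ((y.val : ℤ) : ZMod 2) = y := by decide
  exact this x

open Matrix in
lemma L2 (n r s t p m : ℕ) (A : Matrix (Fin n) (Fin n) ℤ)
    (hn : n = 2*r + 2*s + 2*t + p + m)
    (hA : ∀ i j : Fin n,
      ((A i j : ℤ) : ZMod 4) = ((nfEntry r s t p (i : ℕ) (j : ℕ) : ℤ) : ZMod 4))
    (hp : 1 ≤ p) :
    ∃ v : Fin n → ZMod 2, (A.map (Int.cast : ℤ → ZMod 2)).mulVec v = 0 ∧ qf A v = 1 := by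
  have hi₀ : 2*r+2*s+2*t < n := by omega
  refine ⟨Pi.single ⟨2*r+2*s+2*t, hi₀⟩ 1, ?_, ?_⟩
  · rw [Matrix.mulVec_single]
    funext i
    simp only [Pi.smul_apply, op_smul_eq_mul, Matrix.col, Matrix.transpose_apply, Matrix.map_apply, mul_one, Pi.zero_apply]
    rw [c42 (hA i ⟨2*r+2*s+2*t, hi₀⟩)]
    rw [ZMod.intCast_zmod_eq_zero_iff_dvd]
    exact_mod_cast nf_col_p r s t p _ _ (le_refl _)
  · unfold qf
    have hw : (fun i => (((Pi.single (⟨2*r+2*s+2*t, hi₀⟩ : Fin n) (1:ZMod 2) : Fin n → ZMod 2) i).val : ℤ))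
        = (Pi.single ⟨2*r+2*s+2*t, hi₀⟩ (1:ℤ) : Fin n → ℤ) := by
      funext i
      rcases eq_or_ne i ⟨2*r+2*s+2*t, hi₀⟩ with h|h <;> simp [Pi.single_apply, h] <;> rfl
    rw [hw, Matrix.mulVec_single, single_dotProduct]
    simp only [Pi.smul_apply, op_smul_eq_mul, Matrix.col, Matrix.transpose_apply, mul_one, one_mul]
    have h4 : (A ⟨2*r+2*s+2*t, hi₀⟩ ⟨2*r+2*s+2*t, hi₀⟩) % 4 = 2 % 4 := by
      have h := hA ⟨2*r+2*s+2*t, hi₀⟩ ⟨2*r+2*s+2*t, hi₀⟩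
      rw [show ((⟨2*r+2*s+2*t, hi₀⟩ : Fin n) : ℕ) = 2*r+2*s+2*t from rfl,
        nf_diag_p r s t p hp] at h
      rw [ZMod.intCast_eq_intCast_iff'] at h
      exact_mod_cast h
    have hgoal : (A ⟨2*r+2*s+2*t, hi₀⟩ ⟨2*r+2*s+2*t, hi₀⟩ / 2) % 2 = 1 % 2 := by omega
    have := (ZMod.intCast_eq_intCast_iff'
      (A ⟨2*r+2*s+2*t, hi₀⟩ ⟨2*r+2*s+2*t, hi₀⟩ / 2) 1 2).mpr (by exact_mod_cast hgoal)
    simpa using this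

open Matrix in
lemma cast_quad {n k : ℕ} (B : Matrix (Fin n) (Fin n) ℤ) (w : Fin n → ℤ) :
    ((w ⬝ᵥ B.mulVec w : ℤ) : ZMod k)
      = (fun i => ((w i : ℤ) : ZMod k)) ⬝ᵥ ((B.map (Int.cast : ℤ → ZMod k)) *ᵥ
          (fun i => ((w i : ℤ) : ZMod k))) := by
  calc ((w ⬝ᵥ B.mulVec w : ℤ) : ZMod k)
      = (Int.castRingHom (ZMod k)) (w ⬝ᵥ B.mulVec w) := rfl
    _ = (⇑(Int.castRingHom (ZMod k)) ∘ w) ⬝ᵥ (⇑(Int.castRingHom (ZMod k)) ∘ (B.mulVec w)) :=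
        RingHom.map_dotProduct _ _ _
    _ = (⇑(Int.castRingHom (ZMod k)) ∘ w) ⬝ᵥ ((B.map ⇑(Int.castRingHom (ZMod k))) *ᵥ
          (⇑(Int.castRingHom (ZMod k)) ∘ w)) := by
        congr 1
        funext i
        exact RingHom.map_mulVec _ B w i
    _ = _ := by simp only [Int.coe_castRingHom]; rfl

open Matrix Finset in
lemma L1 (n r s t p m : ℕ) (A : Matrix (Fin n) (Fin n) ℤ)
    (hn : n = 2*r + 2*s + 2*t + p + m)
    (hA : ∀ i j : Fin n,
      ((A i j : ℤ) : ZMod 4) = ((nfEntry r s t p (i : ℕ) (j : ℕ) : ℤ) : ZMod 4))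
    (hp : p = 0)
    (v : Fin n → ZMod 2) (hv : (A.map (Int.cast : ℤ → ZMod 2)).mulVec v = 0) :
    qf A v = 0 := by
  set w : Fin n → ℤ := fun i => ((v i).val : ℤ) with hwdef
  -- Step A: v vanishes on the first 2r+2s coordinates
  have stepA : ∀ i : Fin n, (i : ℕ) < 2*r+2*s → v i = 0 := by
    intro i hi
    have hjn : (if (i:ℕ) % 2 = 0 then (i:ℕ)+1 else (i:ℕ)-1) < n := by
      split <;> omega
    set j : Fin n := ⟨_, hjn⟩ with hjdef
    have hcoef : ∀ k : Fin n, ((A j k : ℤ) : ZMod 2) = if k = i then 1 else 0 := by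
      intro k
      rw [c42 (hA j k)]
      have hmod : ((nfEntry r s t p (j:ℕ) (k:ℕ) : ℤ) : ZMod 2)
          = ((nfEntry r s t p (j:ℕ) (k:ℕ) % 2 : ℤ) : ZMod 2) := by
        rw [ZMod.intCast_eq_intCast_iff']
        omega
      rw [hmod, nf_row r s t p (i:ℕ) (k:ℕ) hi]
      simp [Fin.val_eq_val, apply_ite (Int.cast : ℤ → ZMod 2)]
    have h0 := congrFun hv j
    simp only [Matrix.mulVec, dotProduct, Matrix.map_apply, Pi.zero_apply] at h0
    rw [Finset.sum_congr rfl (fun k _ => by rw [hcoef k])] at h0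
    simpa [ite_mul] using h0
  have stepAw : ∀ i : Fin n, (i : ℕ) < 2*r+2*s → w i = 0 := by
    intro i hi; simp [hwdef, stepA i hi]
  -- Step B : S ≡ 0 mod 2
  have stepB : ((w ⬝ᵥ A.mulVec w : ℤ) : ZMod 2) = 0 := by
    rw [cast_quad]
    have hu : (fun i => ((w i : ℤ) : ZMod 2)) = v := funext fun i => val_cast2 (v i)
    rw [hu, hv, dotProduct_zero]
  -- Step C : S ≡ S' mod 4 where S' uses the normal form matrix
  set N : Matrix (Fin n) (Fin n) ℤ := Matrix.of (fun i j => nfEntry r s t p (i:ℕ) (j:ℕ)) with hN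
  have stepC : ((w ⬝ᵥ A.mulVec w : ℤ) : ZMod 4) = ((w ⬝ᵥ N.mulVec w : ℤ) : ZMod 4) := by
    rw [cast_quad, cast_quad]
    have hmap : (A.map (Int.cast : ℤ → ZMod 4)) = (N.map (Int.cast : ℤ → ZMod 4)) := by
      ext i j
      simp only [Matrix.map_apply, hN, Matrix.of_apply]
      exact hA i j
    rw [hmap]
  -- Step D : S' ≡ 0 mod 4
  have stepD : ((w ⬝ᵥ N.mulVec w : ℤ) : ZMod 4) = 0 := by
    have hW0 : ∀ i : Fin n, (i:ℕ) < 2*r+2*s → ((w i : ℤ) : ZMod 4) = 0 := by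
      intro i hi; rw [stepAw i hi]; norm_num
    rw [cast_quad]
    simp only [Matrix.mulVec, dotProduct, Matrix.map_apply, Finset.mul_sum,
      hN, Matrix.of_apply]
    rw [← Finset.sum_product']
    refine Finset.sum_involution (fun a _ => a.swap) ?_ ?_ (fun a ha => Finset.mem_product.mpr
      ⟨Finset.mem_univ _, Finset.mem_univ _⟩) (fun a ha => Prod.swap_swap a)
    · rintro ⟨i, j⟩ -
      simp only [Prod.swap_prod_mk]
      rcases lt_or_ge (i:ℕ) (2*r+2*s) with h|h
      · rw [hW0 i h]; ring
      rcases lt_or_ge (j:ℕ) (2*r+2*s) with h'|h'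
      · rw [hW0 j h']; ring
      · have hd : ((2 * nfEntry r s t p (i:ℕ) (j:ℕ) : ℤ) : ZMod 4) = 0 := by
          rw [ZMod.intCast_zmod_eq_zero_iff_dvd]
          exact_mod_cast nf_two_mul r s t p _ _ h h'
        push_cast at hd
        rw [nf_symm r s t p (j:ℕ) (i:ℕ)]
        linear_combination (((w i : ℤ) : ZMod 4) * ((w j : ℤ) : ZMod 4)) * hd
    · rintro ⟨i, j⟩ - hf
      intro heq
      apply hf
      have hij : j = i := by
        have := heq
        simp [Prod.ext_iff] at this
        exact this.1
      subst hij
      rcases lt_or_ge (j:ℕ) (2*r+2*s) with h|h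
      · rw [hW0 j h]; ring
      · rw [hp, nf_diag0 r s t (j:ℕ) h]
        push_cast
        ring
  -- conclude
  have h2 : (w ⬝ᵥ A.mulVec w) % 2 = 0 := by
    rw [show (0 : ZMod 2) = ((0:ℤ) : ZMod 2) by norm_num, ZMod.intCast_eq_intCast_iff'] at stepB
    omega
  have h4 : (w ⬝ᵥ A.mulVec w) % 4 = 0 := by
    rw [stepD, show (0 : ZMod 4) = ((0:ℤ) : ZMod 4) by norm_num,
      ZMod.intCast_eq_intCast_iff'] at stepC
    omega
  show (((w ⬝ᵥ A.mulVec w) / 2 : ℤ) : ZMod 2) = 0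
  rw [ZMod.intCast_zmod_eq_zero_iff_dvd]
  omega

open Matrix in
/-- Lemma 2.7(vi): q vanishes on the radical V̄₀ = ker(A mod 2) iff p = 0,
and q takes the value 1 on V̄₀ (i.e. q(V̄₀) = 𝔽₂) iff p ≥ 1. -/
theorem stmt_10 (n r s t p m : ℕ) (A : Matrix (Fin n) (Fin n) ℤ)
    (hsym : A.IsSymm) (hdiag : ∀ i, Even (A i i))
    (hn : n = 2*r + 2*s + 2*t + p + m)
    (hA : ∀ i j : Fin n,
      ((A i j : ℤ) : ZMod 4) = ((nfEntry r s t p (i : ℕ) (j : ℕ) : ℤ) : ZMod 4)) :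
    ((∀ v : Fin n → ZMod 2, (A.map (Int.cast : ℤ → ZMod 2)).mulVec v = 0 → qf A v = 0)
        ↔ p = 0) ∧
    ((∃ v : Fin n → ZMod 2, (A.map (Int.cast : ℤ → ZMod 2)).mulVec v = 0 ∧ qf A v = 1)
        ↔ 1 ≤ p) := by
  constructor
  · constructor
    · intro h
      by_contra hp
      obtain ⟨v, hv, hq⟩ := L2 n r s t p m A hn hA (by omega)
      rw [h v hv] at hq
      exact absurd hq (by decide)
    · intro hp v hv
      exact L1 n r s t p m A hn hA hp v hv
  · constructor
    · rintro ⟨v, hv, hq⟩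
      by_contra hp
      rw [L1 n r s t p m A hn hA (by omega) v hv] at hq
      exact absurd hq (by decide)
    · exact fun hp => L2 n r s t p m A hn hA hp
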